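/- Let $P$ and $Q$ be rational functions with $\psi=P/Q$, where $P,Q$ are coprime polynomials. If $\psi(\xi)\psi(-\xi)=1$ identically, then $Q(\xi)=\pm P(-\xi)$; equivalently, $\psi(\xi)=\pm P(\xi)/P(-\xi)$ for a polynomial $P$ having no pair of symmetric roots (no roots $r,-r$ simultaneously). -/
import Mathlib

open Polynomial

private lemma compcomp {F : Type*} [Field F] (p : Polynomial F) :
    (p.comp (-X)).comp (-X) = p := by
  rw [comp_assoc, neg_comp, X_comp, neg_neg, comp_X]

private lemma comp_dvd {F : Type*} [Field F] {p q : Polynomial F} (h : p ∣ q) :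
    p.comp (-X) ∣ q.comp (-X) := by
  obtain ⟨r, rfl⟩ := h
  exact ⟨r.comp (-X), by rw [mul_comp]⟩

/-- If `ψ = P/Q` with `P, Q` coprime and `ψ(ξ)ψ(-ξ) = 1`, then `Q(ξ) = ±P(-ξ)`
and `P` has no pair of symmetric roots. -/
theorem stmt5 {F : Type*} [Field F] [CharZero F]
    (P Q : Polynomial F) (hQ : Q ≠ 0) (hcop : IsCoprime P Q)
    (hid : P * P.comp (-Polynomial.X) = Q * Q.comp (-Polynomial.X)) :
    (Q = P.comp (-Polynomial.X) ∨ Q = -(P.comp (-Polynomial.X))) ∧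
      (∀ r : F, P.eval r = 0 → P.eval (-r) ≠ 0) := by
  have hQc : Q.comp (-X) ≠ 0 := by
    intro h
    apply hQ
    have := congrArg (fun p => Polynomial.comp p (-X)) h
    simpa [compcomp] using this
  -- Q ∣ P.comp (-X)
  have h1 : Q ∣ P.comp (-X) := by
    have : Q ∣ P * P.comp (-X) := ⟨Q.comp (-X), hid⟩
    exact (hcop.symm).dvd_of_dvd_mul_left this
  -- P ∣ Q.comp (-X), hence P.comp(-X) ∣ Q
  have h2 : P.comp (-X) ∣ Q := by
    have : P ∣ Q.comp (-X) := by
      have hdvd : P ∣ Q * Q.comp (-X) := ⟨P.comp (-X), hid.symm⟩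
      exact hcop.dvd_of_dvd_mul_left hdvd
    have := comp_dvd this
    rwa [compcomp] at this
  obtain ⟨u, hu⟩ := associated_of_dvd_dvd h1 h2
  obtain ⟨c, hcu, hc⟩ := Polynomial.isUnit_iff.mp u.isUnit
  have hPc : P.comp (-X) = C c * Q := by rw [← hu, hc, mul_comm]
  have hP : P = C c * Q.comp (-X) := by
    have := congrArg (fun p => Polynomial.comp p (-X)) hPc
    simpa [compcomp, mul_comp] using this
  have hc2 : c * c = 1 := by
    have h3 : C (c * c) * (Q * Q.comp (-X)) = Q * Q.comp (-X) := by
      calc C (c * c) * (Q * Q.comp (-X))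
          = (C c * Q.comp (-X)) * (C c * Q) := by push_cast [map_mul]; ring
        _ = P * P.comp (-X) := by rw [← hP, ← hPc]
        _ = Q * Q.comp (-X) := hid
    have hne : Q * Q.comp (-X) ≠ 0 := mul_ne_zero hQ hQc
    have : C (c * c) = 1 := by
      have := mul_right_cancel₀ hne (h3.trans (one_mul _).symm)
      exact this
    have := Polynomial.C_injective (this.trans (Polynomial.C_1).symm)
    exact this
  have hc1 : c = 1 ∨ c = -1 := mul_self_eq_one_iff.mp hc2
  have hQeq : Q = P.comp (-X) ∨ Q = -(P.comp (-X)) := by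
    rcases hc1 with h | h
    · left; rw [hPc, h, map_one, one_mul]
    · right; rw [hPc, h, map_neg, map_one, neg_mul, one_mul, neg_neg]
  refine ⟨hQeq, fun r hr hr' => ?_⟩
  have hQr : Q.eval r = 0 := by
    rcases hQeq with h | h <;> rw [h] <;>
      simp [eval_comp, hr']
  obtain ⟨a, b, hab⟩ := hcop
  have := congrArg (Polynomial.eval r) hab
  simp [hr, hQr] at this
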